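/- A right R-module M is RD-injective if and only if M is RD-coflat and satisfies the following finite intersection condition: for any family of subgroups (N_i)_{i∈I} with each N_i of the form (Mr_i : s_i) = {x ∈ M | xs_i ∈ Mr_i} for some r_i, s_i ∈ R, and any family (x_i)_{i∈I} of elements of M, if the cosets x_i + N_i have the finite intersection property, then their total intersection is non-empty. -/

import Mathlib

universe u

open MulOpposite

section RDDefs

variable (R : Type u) [Ring R]

/-- `IsTensorZero R M N l` encodes the statement `∑ mᵢ ⊗ nᵢ = 0` in the tensor product
`M ⊗_R N` of the right `R`-module `M` with the left `R`-module `N`, via the universal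
property of the tensor product: every `R`-balanced biadditive map kills the sum. -/
def IsTensorZero (M N : Type u) [AddCommGroup M] [Module Rᵐᵒᵖ M]
    [AddCommGroup N] [Module R N] (l : List (M × N)) : Prop :=
  ∀ (A : Type u) [AddCommGroup A], ∀ b : M → N → A,
    (∀ m₁ m₂ n, b (m₁ + m₂) n = b m₁ n + b m₂ n) →
    (∀ m n₁ n₂, b m (n₁ + n₂) = b m n₁ + b m n₂) →
    (∀ (r : R) (m : M) (n : N), b (op r • m) n = b m (r • n)) →
    (l.map fun p => b p.1 p.2).sum = 0

/-- A right `R`-module `M` is RD-flat if tensoring with `M` preserves exactness of all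
RD-exact sequences of left `R`-modules; equivalently, for every injective linear map
`f : H → F` of left `R`-modules whose image is a relatively divisible submodule
(`rF ∩ f(H) = r f(H)` for all `r`), the induced map `M ⊗ H → M ⊗ F` is injective. -/
def RDFlat (M : Type u) [AddCommGroup M] [Module Rᵐᵒᵖ M] : Prop :=
  ∀ (H F : Type u) [AddCommGroup H] [Module R H] [AddCommGroup F] [Module R F],
    ∀ f : H →ₗ[R] F, Function.Injective f →
    (∀ (r : R) (h : H) (y : F), f h = r • y → ∃ h' : H, h = r • h') →
    ∀ l : List (M × H),
      IsTensorZero R M F (l.map fun p => (p.1, f p.2)) → IsTensorZero R M H l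

/-- A right `R`-module `N` is RD-injective if every homomorphism into `N` from a
relatively divisible submodule of a right `R`-module extends to the whole module. -/
def RDInjective (N : Type u) [AddCommGroup N] [Module Rᵐᵒᵖ N] : Prop :=
  ∀ (K L : Type u) [AddCommGroup K] [Module Rᵐᵒᵖ K] [AddCommGroup L] [Module Rᵐᵒᵖ L],
    ∀ f : K →ₗ[Rᵐᵒᵖ] L, Function.Injective f →
    (∀ (r : R) (k : K) (y : L), f k = op r • y → ∃ k' : K, k = op r • k') →
    ∀ g : K →ₗ[Rᵐᵒᵖ] N, ∃ h : L →ₗ[Rᵐᵒᵖ] N, h.comp f = g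

/-- An injective linear map `f : K → L` of right `R`-modules is pure if every finite
system of linear equations `∑ⱼ xⱼ aᵢⱼ = kᵢ` with constants in `K` which is solvable
in `L` is solvable in `K`. -/
def IsPure {K L : Type u} [AddCommGroup K] [Module Rᵐᵒᵖ K] [AddCommGroup L]
    [Module Rᵐᵒᵖ L] (f : K →ₗ[Rᵐᵒᵖ] L) : Prop :=
  ∀ (m n : ℕ) (a : Fin m → Fin n → R) (k : Fin m → K),
    (∃ x : Fin n → L, ∀ i, (∑ j, op (a i j) • x j) = f (k i)) →
    ∃ y : Fin n → K, ∀ i, (∑ j, op (a i j) • y j) = k i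

/-- A right `R`-module `M` is RD-coflat if every RD-exact sequence `0 → M → P → Q → 0`
is pure-exact, i.e. whenever `M` embeds as a relatively divisible submodule of a right
module `P`, it is a pure submodule of `P`. -/
def RDCoflat (M : Type u) [AddCommGroup M] [Module Rᵐᵒᵖ M] : Prop :=
  ∀ (P : Type u) [AddCommGroup P] [Module Rᵐᵒᵖ P],
    ∀ f : M →ₗ[Rᵐᵒᵖ] P, Function.Injective f →
    (∀ (r : R) (x : M) (y : P), f x = op r • y → ∃ x' : M, x = op r • x') →
    IsPure R f

/-- A right `R`-module `N` is pure-injective if every homomorphism into `N` from a pure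
submodule of a right `R`-module extends to the whole module. -/
def PureInjective (N : Type u) [AddCommGroup N] [Module Rᵐᵒᵖ N] : Prop :=
  ∀ (K L : Type u) [AddCommGroup K] [Module Rᵐᵒᵖ K] [AddCommGroup L] [Module Rᵐᵒᵖ L],
    ∀ f : K →ₗ[Rᵐᵒᵖ] L, Function.Injective f → IsPure R f →
    ∀ g : K →ₗ[Rᵐᵒᵖ] N, ∃ h : L →ₗ[Rᵐᵒᵖ] N, h.comp f = g

/-- A right `R`-module `F` is pure-projective if every homomorphism from `F` to a
quotient in a pure-exact sequence lifts. -/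
def PureProjective (F : Type u) [AddCommGroup F] [Module Rᵐᵒᵖ F] : Prop :=
  ∀ (L Q : Type u) [AddCommGroup L] [Module Rᵐᵒᵖ L] [AddCommGroup Q] [Module Rᵐᵒᵖ Q],
    ∀ p : L →ₗ[Rᵐᵒᵖ] Q, Function.Surjective p → IsPure R (LinearMap.ker p).subtype →
    ∀ g : F →ₗ[Rᵐᵒᵖ] Q, ∃ h : F →ₗ[Rᵐᵒᵖ] L, p.comp h = g

/-- A right `R`-module `F` is RD-projective if every homomorphism from `F` to a
quotient in an RD-exact sequence (the kernel is a relatively divisible submodule)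
lifts. -/
def RDProjective (F : Type u) [AddCommGroup F] [Module Rᵐᵒᵖ F] : Prop :=
  ∀ (L Q : Type u) [AddCommGroup L] [Module Rᵐᵒᵖ L] [AddCommGroup Q] [Module Rᵐᵒᵖ Q],
    ∀ p : L →ₗ[Rᵐᵒᵖ] Q, Function.Surjective p →
    (∀ (r : R) (x : L), p x = 0 → (∃ y : L, x = op r • y) →
      ∃ z : L, p z = 0 ∧ x = op r • z) →
    ∀ g : F →ₗ[Rᵐᵒᵖ] Q, ∃ h : F →ₗ[Rᵐᵒᵖ] L, p.comp h = g

end RDDefs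

section AuxProof

section Aux
variable {R : Type u} [Ring R]

def rdMat {t : ℕ} (aa rr : Fin t → R) (i : Fin t) (j : Fin (t+1)) : R :=
  if j = 0 then aa i else if j = i.succ then -(rr i) else 0

lemma rdMat_sum {A : Type*} [AddCommGroup A] [Module Rᵐᵒᵖ A]
    {t : ℕ} (aa rr : Fin t → R) (xs : Fin (t+1) → A) (i : Fin t) :
    (∑ j, op (rdMat aa rr i j) • xs j) = op (aa i) • xs 0 - op (rr i) • xs i.succ := by
  rw [Fin.sum_univ_succ]
  simp [rdMat, Fin.succ_ne_zero, Fin.succ_inj, apply_ite op, ite_smul, sub_eq_add_neg,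
    Finset.sum_ite_eq']
end Aux

section Split
variable {R : Type u} [Ring R] {M : Type u} [AddCommGroup M] [Module Rᵐᵒᵖ M]

lemma split_of_rd (hco : RDCoflat R M)
    (hfip : ∀ (ι : Type u) (r s : ι → R) (x : ι → M),
      (∀ J : Finset ι, ∃ m : M, ∀ i ∈ J, ∃ y : M, op (s i) • (m - x i) = op (r i) • y) →
      ∃ m : M, ∀ i, ∃ y : M, op (s i) • (m - x i) = op (r i) • y)
    (P : Type u) [AddCommGroup P] [Module Rᵐᵒᵖ P] (e : M →ₗ[Rᵐᵒᵖ] P)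
    (hinj : Function.Injective e)
    (hrd : ∀ (r : R) (x : M) (y : P), e x = op r • y → ∃ x', x = op r • x') :
    ∃ ρ : P →ₗ[Rᵐᵒᵖ] M, ρ.comp e = LinearMap.id := by
  classical
  set 𝒮 : Set (Submodule Rᵐᵒᵖ (P × M)) := {G |
    (∀ m : M, (e m, m) ∈ G) ∧ (∀ u : M, ((0:P), u) ∈ G → u = 0) ∧
    (∀ (p : P) (u : M), (p, u) ∈ G → ∀ (r : R) (q : P), p = op r • q → ∃ w, u = op r • w)}
    with h𝒮
  -- base point
  have hbase : LinearMap.range (e.prod LinearMap.id) ∈ 𝒮 := by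
    refine ⟨fun m => ⟨m, rfl⟩, ?_, ?_⟩
    · rintro u ⟨m, hm⟩
      simp only [LinearMap.prod_apply, LinearMap.id_apply, Function.prod, Prod.mk.injEq] at hm
      obtain ⟨h1, h2⟩ := hm
      have : m = 0 := hinj (by simpa using h1)
      rw [← h2, this]
    · rintro p u ⟨m, hm⟩ r q hpq
      simp only [LinearMap.prod_apply, LinearMap.id_apply, Function.prod, Prod.mk.injEq] at hm
      obtain ⟨h1, h2⟩ := hm
      subst h2
      exact hrd r m q (by rw [h1, hpq])
  -- Zorn
  obtain ⟨G, -, hG𝒮, hGmax⟩ := zorn_le_nonempty₀ 𝒮 (fun c hc hchain y hy => by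
    refine ⟨sSup c, ?_, fun z hz => le_sSup hz⟩
    have hdir : DirectedOn (· ≤ ·) c := hchain.directedOn
    have hmem : ∀ z : P × M, z ∈ sSup c → ∃ G₁ ∈ c, z ∈ G₁ := fun z hz =>
      (Submodule.mem_sSup_of_directed ⟨y, hy⟩ hdir).1 hz
    refine ⟨fun m => le_sSup hy (by exact (hc hy).1 m), ?_, ?_⟩
    · intro u hu
      obtain ⟨G₁, hG₁, hu⟩ := hmem _ hu
      exact (hc hG₁).2.1 u hu
    · intro p u hu r q hpq
      obtain ⟨G₁, hG₁, hu⟩ := hmem _ hu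
      exact (hc hG₁).2.2 p u hu r q hpq) _ hbase
  obtain ⟨hGe, hGgraph, hGrd⟩ := hG𝒮
  have huniq : ∀ (p : P) (u u' : M), (p, u) ∈ G → (p, u') ∈ G → u = u' := by
    intro p u u' h h'
    have : ((0 : P), u - u') ∈ G := by
      have := G.sub_mem h h'
      simpa using this
    exact sub_eq_zero.mp (hGgraph _ this)
  -- totality of the maximal graph
  have htot : ∀ p : P, ∃ u : M, (p, u) ∈ G := by
    by_contra hcon
    push_neg at hcon
    obtain ⟨x, hx⟩ := hcon
    -- finite solvability via the pushout over (N, φ) and RD-coflatness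
    have hsolv : ∀ (t : ℕ) (rr aa : Fin t → R) (nn qq : Fin t → P) (vv : Fin t → M),
        (∀ j, (nn j, vv j) ∈ G) → (∀ j, nn j + op (aa j) • x = op (rr j) • qq j) →
        ∃ m₀ : M, ∀ j, ∃ y : M, vv j + op (aa j) • m₀ = op (rr j) • y := by
      intro t rr aa nn qq vv hmem heqn
      set negS : P × M →ₗ[Rᵐᵒᵖ] P × M :=
        (LinearMap.fst Rᵐᵒᵖ P M).prod (-(LinearMap.snd Rᵐᵒᵖ P M)) with hnegS
      have hnegS_apply : ∀ z : P × M, negS z = (z.1, -z.2) := fun z => rfl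
      set W : Submodule Rᵐᵒᵖ (P × M) := G.map negS with hW
      set e'' : M →ₗ[Rᵐᵒᵖ] ((P × M) ⧸ W) := W.mkQ.comp (LinearMap.inr Rᵐᵒᵖ P M) with he''
      have he''_apply : ∀ m : M, e'' m = W.mkQ (0, m) := fun m => rfl
      have hWmem : ∀ z : P × M, z ∈ W ↔ (z.1, -z.2) ∈ G := by
        intro z
        constructor
        · rintro ⟨⟨p, u⟩, hpu, rfl⟩
          simpa [hnegS_apply] using hpu
        · intro h
          exact ⟨(z.1, -z.2), h, by simp [hnegS_apply]⟩
      have hinj'' : Function.Injective e'' := by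
        intro m₁ m₂ h
        have h0 : e'' (m₁ - m₂) = 0 := by rw [map_sub, h, sub_self]
        rw [he''_apply, ← LinearMap.mem_ker, W.ker_mkQ] at h0
        have := (hWmem _).1 h0
        have := hGgraph _ this
        have h3 : m₂ - m₁ = 0 := by simpa using this
        exact (sub_eq_zero.mp h3).symm
      have hrd'' : ∀ (r : R) (m : M) (y : (P × M) ⧸ W),
          e'' m = op r • y → ∃ m', m = op r • m' := by
        intro r m y h
        obtain ⟨⟨q, u₀⟩, rfl⟩ := W.mkQ_surjective y
        rw [he''_apply, ← map_smul] at h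
        have h0 : W.mkQ (((0:P), m) - op r • (q, u₀)) = 0 := by
          rw [map_sub, h, sub_self]
        rw [← LinearMap.mem_ker, W.ker_mkQ, hWmem] at h0
        simp only [Prod.fst_sub, Prod.snd_sub, Prod.smul_mk, Prod.fst_zero, Prod.snd_zero,
          zero_sub] at h0
        obtain ⟨w, hw⟩ := hGrd _ _ h0 r (-q) (by simp)
        refine ⟨u₀ - w, ?_⟩
        have h1 : -(m - op r • u₀) = op r • w := hw
        rw [smul_sub, ← h1]
        abel
      have hpure := hco _ e'' hinj'' hrd''
      have hprem : ∃ xs : Fin (t+1) → ((P × M) ⧸ W),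
          ∀ i, (∑ j, op (rdMat aa rr i j) • xs j) = e'' (-(vv i)) := by
        refine ⟨Fin.cons (W.mkQ (x, 0)) (fun j => W.mkQ (qq j, 0)), fun i => ?_⟩
        rw [rdMat_sum, Fin.cons_zero, Fin.cons_succ, he''_apply, ← map_smul, ← map_smul,
          ← map_sub, ← sub_eq_zero, ← map_sub, ← LinearMap.mem_ker, W.ker_mkQ, hWmem]
        have h5 : op (aa i) • x - op (rr i) • qq i = -(nn i) := by
          rw [← heqn i]; abel
        have h6 : ((op (aa i) • ((x:P), (0:M)) - op (rr i) • (qq i, (0:M))) - ((0:P), -(vv i)))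
            = (-(nn i), vv i) := by
          rw [Prod.ext_iff]
          refine ⟨by simpa using h5, by simp⟩
        rw [h6]
        simpa using G.neg_mem (hmem i)
      obtain ⟨ys, hys⟩ := hpure t (t + 1) (rdMat aa rr) (fun i => -(vv i)) hprem
      refine ⟨ys 0, fun j => ⟨ys j.succ, ?_⟩⟩
      have h2 := hys j
      rw [rdMat_sum] at h2
      calc vv j + op (aa j) • ys 0
          = vv j + (op (aa j) • ys 0 - op (rr j) • ys j.succ) + op (rr j) • ys j.succ := by
            abel
        _ = op (rr j) • ys j.succ := by rw [h2]; abel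
    -- index type for the FIP application
    let ι' : Type u := {d : (R × R) × P × P //
      (∃ u : M, (d.2.1, u) ∈ G) ∧ d.2.1 + op d.1.2 • x = op d.1.1 • d.2.2}
    let vAt : ι' → M := fun d => Classical.choose d.2.1
    have hvAt : ∀ d : ι', (d.1.2.1, vAt d) ∈ G := fun d => Classical.choose_spec d.2.1
    have hsingle : ∀ d : ι', ∃ m₁ : M, ∃ y : M,
        vAt d + op d.1.1.2 • m₁ = op d.1.1.1 • y := by
      intro d
      obtain ⟨m₀, hm₀⟩ := hsolv 1 (fun _ => d.1.1.1) (fun _ => d.1.1.2) (fun _ => d.1.2.1)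
        (fun _ => d.1.2.2) (fun _ => vAt d) (fun _ => hvAt d) (fun _ => d.2.2)
      exact ⟨m₀, hm₀ 0⟩
    let xd : ι' → M := fun d => Classical.choose (hsingle d)
    have hxd : ∀ d : ι', ∃ y : M, vAt d + op d.1.1.2 • xd d = op d.1.1.1 • y :=
      fun d => Classical.choose_spec (hsingle d)
    have hfin : ∀ J : Finset ι', ∃ m : M, ∀ d ∈ J,
        ∃ y : M, op d.1.1.2 • (m - xd d) = op d.1.1.1 • y := by
      intro J
      obtain ⟨m₀, hm₀⟩ := hsolv J.card
        (fun j => (J.equivFin.symm j : ι').1.1.1)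
        (fun j => (J.equivFin.symm j : ι').1.1.2)
        (fun j => (J.equivFin.symm j : ι').1.2.1)
        (fun j => (J.equivFin.symm j : ι').1.2.2)
        (fun j => vAt (J.equivFin.symm j))
        (fun j => hvAt _) (fun j => (J.equivFin.symm j : ι').2.2)
      refine ⟨m₀, fun d hd => ?_⟩
      have h1 := hm₀ (J.equivFin ⟨d, hd⟩)
      rw [Equiv.symm_apply_apply] at h1
      obtain ⟨y₁, hy₁⟩ := h1
      obtain ⟨y₂, hy₂⟩ := hxd d
      refine ⟨y₁ - y₂, ?_⟩
      rw [smul_sub, smul_sub, ← hy₁, ← hy₂]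
      abel
    obtain ⟨m, hm⟩ := hfip ι' (fun d => d.1.1.1) (fun d => d.1.1.2) xd hfin
    -- the key coset property of m
    have hkey : ∀ (r a : R) (n q : P) (u : M), (n, u) ∈ G → n + op a • x = op r • q →
        ∃ y : M, u + op a • m = op r • y := by
      intro r a n q u hu heq2
      let d : ι' := ⟨((r, a), n, q), ⟨u, hu⟩, heq2⟩
      obtain ⟨y₁, hy₁⟩ := hm d
      obtain ⟨y₂, hy₂⟩ := hxd d
      have hv : vAt d = u := huniq n _ _ (hvAt d) hu
      rw [hv] at hy₂
      refine ⟨y₂ + y₁, ?_⟩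
      rw [smul_add, ← hy₂, ← hy₁, smul_sub]
      abel
    -- the extended graph
    let G' : Submodule Rᵐᵒᵖ (P × M) := G ⊔ Submodule.span Rᵐᵒᵖ {((x, m) : P × M)}
    have hmemG' : ∀ z ∈ G', ∃ p u, ∃ c : R, (p, u) ∈ G ∧ z = (p + op c • x, u + op c • m) := by
      intro z hz
      rcases Submodule.mem_sup.mp hz with ⟨g, hg, w, hw, rfl⟩
      rcases Submodule.mem_span_singleton.mp hw with ⟨c, rfl⟩
      refine ⟨g.1, g.2, unop c, hg, ?_⟩
      rw [Prod.ext_iff]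
      constructor <;> simp
    have hG'𝒮 : G' ∈ 𝒮 := by
      refine ⟨fun m' => Submodule.mem_sup_left (hGe m'), ?_, ?_⟩
      · intro u hu
        obtain ⟨p, w, c, hpw, heq3⟩ := hmemG' _ hu
        rw [Prod.mk.injEq] at heq3
        obtain ⟨h1, h2⟩ := heq3
        have h1' : p + op c • x = op (0:R) • (0:P) := by simpa using h1.symm
        obtain ⟨y, hy⟩ := hkey 0 c p 0 w hpw h1'
        have h4 : w + op c • m = 0 := by simpa using hy
        rw [h2, h4]
      · intro p' u' hu r q hpq
        obtain ⟨p, w, c, hpw, heq3⟩ := hmemG' _ hu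
        rw [Prod.mk.injEq] at heq3
        obtain ⟨h1, h2⟩ := heq3
        obtain ⟨y, hy⟩ := hkey r c p q w hpw (by rw [← h1, ← hpq])
        exact ⟨y, by rw [h2, hy]⟩
    have hle : G ≤ G' := le_sup_left
    have hG'le : G' ≤ G := hGmax hG'𝒮 hle
    have hxm : ((x : P), m) ∈ G :=
      hG'le (Submodule.mem_sup_right (Submodule.mem_span_singleton_self _))
    exact hx m hxm
  -- build the retraction from the total graph
  let F1 : G →ₗ[Rᵐᵒᵖ] P := (LinearMap.fst Rᵐᵒᵖ P M).comp G.subtype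
  have hF1bij : Function.Bijective F1 := by
    constructor
    · rintro ⟨⟨p, u⟩, hpu⟩ ⟨⟨p', u'⟩, hp'u'⟩ h
      have hpp : p = p' := h
      subst hpp
      have : u = u' := huniq p u u' hpu hp'u'
      subst this
      rfl
    · intro p
      obtain ⟨u, hu⟩ := htot p
      exact ⟨⟨(p, u), hu⟩, rfl⟩
  let eqv := LinearEquiv.ofBijective F1 hF1bij
  let ρ : P →ₗ[Rᵐᵒᵖ] M :=
    ((LinearMap.snd Rᵐᵒᵖ P M).comp G.subtype).comp (eqv.symm : P →ₗ[Rᵐᵒᵖ] G)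
  refine ⟨ρ, ?_⟩
  ext m'
  have h1 : eqv.symm (e m') = ⟨(e m', m'), hGe m'⟩ := by
    apply eqv.injective
    rw [LinearEquiv.apply_symm_apply]
    rfl
  show (((LinearMap.snd Rᵐᵒᵖ P M).comp G.subtype).comp (eqv.symm : P →ₗ[Rᵐᵒᵖ] G)) (e m') = m'
  rw [LinearMap.comp_apply, LinearEquiv.coe_coe, h1]
  rfl
end Split

section Main
variable {R : Type u} [Ring R] {M : Type u} [AddCommGroup M] [Module Rᵐᵒᵖ M]

theorem backward_dir (hco : RDCoflat R M)
    (hfip : ∀ (ι : Type u) (r s : ι → R) (x : ι → M),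
      (∀ J : Finset ι, ∃ m : M, ∀ i ∈ J, ∃ y : M, op (s i) • (m - x i) = op (r i) • y) →
      ∃ m : M, ∀ i, ∃ y : M, op (s i) • (m - x i) = op (r i) • y) :
    RDInjective R M := by
  intro K L _ _ _ _ f hinjf hrdf g
  let W₀ : Submodule Rᵐᵒᵖ (M × L) := LinearMap.range (g.prod (-f))
  let e₀ : M →ₗ[Rᵐᵒᵖ] (M × L) ⧸ W₀ := W₀.mkQ.comp (LinearMap.inl Rᵐᵒᵖ M L)
  let l₀ : L →ₗ[Rᵐᵒᵖ] (M × L) ⧸ W₀ := W₀.mkQ.comp (LinearMap.inr Rᵐᵒᵖ M L)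
  have hW₀mem : ∀ z : M × L, z ∈ W₀ ↔ ∃ k : K, g k = z.1 ∧ -(f k) = z.2 := by
    intro z
    constructor
    · rintro ⟨k, hk⟩
      refine ⟨k, ?_, ?_⟩ <;> rw [← hk] <;> rfl
    · rintro ⟨k, h1, h2⟩
      exact ⟨k, Prod.ext h1 h2⟩
  have he₀_apply : ∀ m : M, e₀ m = W₀.mkQ (m, 0) := fun _ => rfl
  have hl₀_apply : ∀ y : L, l₀ y = W₀.mkQ (0, y) := fun _ => rfl
  have hinj₀ : Function.Injective e₀ := by
    intro m₁ m₂ h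
    have h0 : W₀.mkQ ((m₁ - m₂ : M), (0:L)) = 0 := by
      have : e₀ (m₁ - m₂) = 0 := by rw [map_sub, h, sub_self]
      simpa [he₀_apply, Prod.mk_sub_mk] using this
    rw [← LinearMap.mem_ker, W₀.ker_mkQ, hW₀mem] at h0
    obtain ⟨k, h1, h2⟩ := h0
    have hk0 : k = 0 := hinjf (by simpa using congrArg Neg.neg h2)
    rw [hk0, map_zero] at h1
    exact sub_eq_zero.mp h1.symm
  have hrd₀ : ∀ (r : R) (m : M) (y : (M × L) ⧸ W₀),
      e₀ m = op r • y → ∃ m', m = op r • m' := by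
    intro r m y h
    obtain ⟨⟨u, z⟩, rfl⟩ := W₀.mkQ_surjective y
    rw [he₀_apply, ← map_smul] at h
    have h0 : W₀.mkQ (((m:M), (0:L)) - op r • (u, z)) = 0 := by rw [map_sub, h, sub_self]
    rw [← LinearMap.mem_ker, W₀.ker_mkQ, hW₀mem] at h0
    obtain ⟨k, h1, h2⟩ := h0
    simp only [Prod.fst_sub, Prod.snd_sub, Prod.smul_mk, zero_sub, neg_inj] at h1 h2
    obtain ⟨k', hk'⟩ := hrdf r k z h2
    refine ⟨u + g k', ?_⟩
    rw [smul_add, ← map_smul, ← hk', h1]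
    abel
  obtain ⟨ρ, hρ⟩ := split_of_rd hco hfip _ e₀ hinj₀ hrd₀
  refine ⟨ρ.comp l₀, ?_⟩
  ext k
  show ρ (l₀ (f k)) = g k
  have h1 : l₀ (f k) = e₀ (g k) := by
    rw [hl₀_apply, he₀_apply, ← sub_eq_zero, ← map_sub, ← LinearMap.mem_ker, W₀.ker_mkQ,
      hW₀mem]
    exact ⟨-k, by simp, by simp⟩
  rw [h1]
  exact LinearMap.congr_fun hρ (g k)

end Main

section Fwd
variable {R : Type u} [Ring R] {M : Type u} [AddCommGroup M] [Module Rᵐᵒᵖ M]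

theorem fwd_coflat (hRD : RDInjective R M) : RDCoflat R M := by
  intro P _ _ f hinj hrdf
  intro m n a k hx
  obtain ⟨xs, hxs⟩ := hx
  obtain ⟨hh, hcomp⟩ := hRD M P f hinj hrdf LinearMap.id
  refine ⟨fun j => hh (xs j), fun i => ?_⟩
  have : (∑ j, op (a i j) • hh (xs j)) = hh (∑ j, op (a i j) • xs j) := by
    rw [map_sum]
    simp [map_smul]
  rw [this, hxs i]
  exact LinearMap.congr_fun hcomp (k i)

theorem fwd_fip (hRD : RDInjective R M) :
    ∀ (ι : Type u) (r s : ι → R) (x : ι → M),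
      (∀ J : Finset ι, ∃ m : M, ∀ i ∈ J, ∃ y : M, op (s i) • (m - x i) = op (r i) • y) →
      ∃ m : M, ∀ i, ∃ y : M, op (s i) • (m - x i) = op (r i) • y := by
  classical
  intro ι r s x₀ hfin
  let F : Type u := Option ι →₀ Rᵐᵒᵖ
  let genM : ι → M := fun i => -(op (s i) • x₀ i)
  let genF : ι → F := fun i =>
    Finsupp.single none (op (s i)) - Finsupp.single (some i) (op (r i))
  let gen : ι → M × F := fun i => (genM i, genF i)
  let W : Submodule Rᵐᵒᵖ (M × F) := Submodule.span Rᵐᵒᵖ (Set.range gen)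
  let e : M →ₗ[Rᵐᵒᵖ] (M × F) ⧸ W := W.mkQ.comp (LinearMap.inl Rᵐᵒᵖ M F)
  have he_apply : ∀ m : M, e m = W.mkQ (m, 0) := fun _ => rfl
  have hgenF : ∀ i j, (genF i) j
      = (if (none : Option ι) = j then op (s i) else 0)
        - (if (some i : Option ι) = j then op (r i) else 0) := by
    intro i j
    show ((Finsupp.single none (op (s i)) - Finsupp.single (some i) (op (r i)) : F)) j = _
    rw [Finsupp.sub_apply, Finsupp.single_apply, Finsupp.single_apply]
  -- decomposition of span elements
  have hspan : ∀ z : M × F, z ∈ W → ∃ c : ι →₀ Rᵐᵒᵖ,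
      (z.1 = ∑ i ∈ c.support, -((c i * op (s i)) • x₀ i)) ∧
      (z.2 none = ∑ i ∈ c.support, c i * op (s i)) ∧
      (∀ i₀ : ι, z.2 (some i₀) = -(c i₀ * op (r i₀))) := by
    intro z hz
    obtain ⟨c, hc⟩ := Finsupp.mem_span_range_iff_exists_finsupp.mp hz
    rw [Finsupp.sum] at hc
    have h1 := congrArg (LinearMap.fst Rᵐᵒᵖ M F) hc
    rw [map_sum] at h1
    have h2 := congrArg (LinearMap.snd Rᵐᵒᵖ M F) hc
    rw [map_sum] at h2
    refine ⟨c, ?_, ?_, ?_⟩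
    · rw [show z.1 = (LinearMap.fst Rᵐᵒᵖ M F) z from rfl, ← h1]
      refine Finset.sum_congr rfl fun i _ => ?_
      show c i • genM i = -((c i * op (s i)) • x₀ i)
      show c i • (-(op (s i) • x₀ i)) = _
      rw [smul_neg, smul_smul]
    · have h3 := congrArg (Finsupp.lapply (M := Rᵐᵒᵖ) (R := Rᵐᵒᵖ) (none : Option ι)) h2
      rw [map_sum] at h3
      rw [show z.2 none = Finsupp.lapply (R := Rᵐᵒᵖ) none ((LinearMap.snd Rᵐᵒᵖ M F) z) from rfl, ← h3]
      refine Finset.sum_congr rfl fun i _ => ?_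
      show (c i • genF i) none = c i * op (s i)
      rw [Finsupp.smul_apply, hgenF]
      simp [smul_eq_mul]
    · intro i₀
      have h3 := congrArg (Finsupp.lapply (M := Rᵐᵒᵖ) (R := Rᵐᵒᵖ) (some i₀)) h2
      rw [map_sum] at h3
      rw [show z.2 (some i₀) = Finsupp.lapply (R := Rᵐᵒᵖ) (some i₀) ((LinearMap.snd Rᵐᵒᵖ M F) z) from rfl,
        ← h3]
      have hterm : ∀ i ∈ c.support,
          Finsupp.lapply (R := Rᵐᵒᵖ) (some i₀) ((LinearMap.snd Rᵐᵒᵖ M F) (c i • gen i))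
          = if i = i₀ then -(c i * op (r i)) else 0 := by
        intro i _
        show (c i • genF i) (some i₀) = _
        rw [Finsupp.smul_apply, hgenF]
        by_cases h : i = i₀
        · subst h; simp [smul_eq_mul]
        · simp [h, (fun hh => h (Option.some_inj.mp hh) : ¬ (some i : Option ι) = some i₀),
            smul_eq_mul]
      rw [Finset.sum_congr rfl hterm, Finset.sum_ite_eq' c.support i₀
        (fun i => -(c i * op (r i)))]
      by_cases h : i₀ ∈ c.support
      · simp [h]
      · simp [h, Finsupp.notMem_support_iff.mp h]
  -- solutions over finite subfamilies, packaged as a sum identity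
  have hsum : ∀ c : ι →₀ Rᵐᵒᵖ, ∃ (mJ : M) (yy : ι → M),
      (∑ i ∈ c.support, -((c i * op (s i)) • x₀ i))
        = -((∑ i ∈ c.support, c i * op (s i)) • mJ)
          + ∑ i ∈ c.support, (c i * op (r i)) • yy i := by
    intro c
    obtain ⟨mJ, hmJ⟩ := hfin c.support
    choose yy hyy using hmJ
    refine ⟨mJ, fun i => if h : i ∈ c.support then yy i h else 0, ?_⟩
    have hterm : ∀ i ∈ c.support, -((c i * op (s i)) • x₀ i)
        = -((c i * op (s i)) • mJ)
          + (c i * op (r i)) • (if h : i ∈ c.support then yy i h else 0) := by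
      intro i hi
      rw [dif_pos hi]
      have h5 : (c i * op (r i)) • yy i hi
          = (c i * op (s i)) • mJ - (c i * op (s i)) • x₀ i := by
        calc (c i * op (r i)) • yy i hi
            = c i • (op (r i) • yy i hi) := by rw [mul_smul]
          _ = c i • (op (s i) • (mJ - x₀ i)) := by rw [← hyy i hi]
          _ = (c i * op (s i)) • mJ - (c i * op (s i)) • x₀ i := by
              rw [smul_sub, smul_sub, smul_smul, smul_smul]
      rw [h5]
      abel
    rw [Finset.sum_congr rfl hterm, Finset.sum_add_distrib, Finset.sum_smul]
    congr 1
    rw [← Finset.sum_neg_distrib]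
  -- e is injective
  have hinj : Function.Injective e := by
    intro m₁ m₂ h
    have h0 : ((m₁ - m₂ : M), (0:F)) ∈ W := by
      have h1 : e (m₁ - m₂) = 0 := by rw [map_sub, h, sub_self]
      rw [he_apply, ← LinearMap.mem_ker, W.ker_mkQ] at h1
      exact h1
    obtain ⟨c, hc1, hc2, hc3⟩ := hspan _ h0
    obtain ⟨mJ, yy, hy⟩ := hsum c
    rw [hy] at hc1
    have hz1 : (∑ i ∈ c.support, c i * op (s i)) = 0 := by
      rw [← hc2]; rfl
    have hz2 : ∀ i ∈ c.support, (c i * op (r i)) • yy i = (0 : M) := by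
      intro i _
      have h4 : -(c i * op (r i)) = 0 := by rw [← hc3 i]; rfl
      rw [neg_eq_zero.mp h4, zero_smul]
    rw [hz1, Finset.sum_congr rfl hz2] at hc1
    simp only [zero_smul, neg_zero, zero_add, Finset.sum_const_zero] at hc1
    exact sub_eq_zero.mp hc1
  -- e is relatively divisible
  have hrd : ∀ (r₀ : R) (m : M) (y : (M × F) ⧸ W), e m = op r₀ • y →
      ∃ m', m = op r₀ • m' := by
    intro r₀ m y h
    obtain ⟨⟨u, zz⟩, rfl⟩ := W.mkQ_surjective y
    have h0 : ((m - op r₀ • u : M), (-(op r₀ • zz) : F)) ∈ W := by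
      have h1 : W.mkQ (((m : M), (0:F)) - op r₀ • (u, zz)) = 0 := by
        rw [map_sub, map_smul, ← he_apply, h, sub_self]
      rw [← LinearMap.mem_ker, W.ker_mkQ] at h1
      simpa [Prod.mk_sub_mk, zero_sub] using h1
    obtain ⟨c, hc1, hc2, hc3⟩ := hspan _ h0
    obtain ⟨mJ, yy, hy⟩ := hsum c
    rw [hy] at hc1
    have happF : ∀ j, ((-(op r₀ • zz) : F)) j = -(op r₀ * zz j) := by
      intro j
      rw [Finsupp.neg_apply, Finsupp.smul_apply, smul_eq_mul]
    have hz1 : (∑ i ∈ c.support, c i * op (s i)) = -(op r₀ * zz none) := by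
      rw [← hc2, happF]
    have hz2 : ∀ i ∈ c.support, (c i * op (r i)) • yy i
        = op r₀ • (zz (some i) • yy i) := by
      intro i _
      have h4 := hc3 i
      rw [happF] at h4
      have h5 : op r₀ * zz (some i) = c i * op (r i) := neg_inj.mp h4
      rw [← h5, mul_smul]
    rw [hz1, Finset.sum_congr rfl hz2] at hc1
    simp only [neg_smul, neg_neg, mul_smul] at hc1
    rw [← Finset.smul_sum] at hc1
    refine ⟨u + zz none • mJ + ∑ i ∈ c.support, zz (some i) • yy i, ?_⟩
    have h6 : m = op r₀ • u + (m - op r₀ • u) := by abel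
    rw [h6, hc1, smul_add, smul_add]
    abel
  -- apply RD-injectivity to the canonical RD-extension
  obtain ⟨hh, hcomp⟩ := hRD M ((M × F) ⧸ W) e hinj hrd LinearMap.id
  have hrel : ∀ i : ι,
      op (s i) • (W.mkQ ((0:M), (Finsupp.single none 1 : F)) - e (x₀ i))
        = op (r i) • W.mkQ ((0:M), (Finsupp.single (some i) 1 : F)) := by
    intro i
    rw [he_apply, ← map_sub, ← map_smul, ← map_smul, ← sub_eq_zero, ← map_sub,
      ← LinearMap.mem_ker, W.ker_mkQ]
    have h7 : (op (s i) • (((0:M), (Finsupp.single none 1 : F)) - ((x₀ i), (0:F)))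
        - op (r i) • ((0:M), (Finsupp.single (some i) 1 : F))) = gen i := by
      refine Prod.ext ?_ ?_
      · show op (s i) • ((0:M) - x₀ i) - op (r i) • (0:M) = genM i
        show _ = -(op (s i) • x₀ i)
        rw [zero_sub, smul_neg, smul_zero, sub_zero]
      · show op (s i) • ((Finsupp.single none 1 : F) - 0)
            - op (r i) • (Finsupp.single (some i) 1 : F) = genF i
        rw [sub_zero, Finsupp.smul_single, Finsupp.smul_single, smul_eq_mul, smul_eq_mul,
          mul_one, mul_one]
    rw [h7]
    exact Submodule.subset_span ⟨i, rfl⟩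
  refine ⟨hh (W.mkQ ((0:M), (Finsupp.single none 1 : F))), fun i =>
    ⟨hh (W.mkQ ((0:M), (Finsupp.single (some i) 1 : F))), ?_⟩⟩
  have h8 := congrArg hh (hrel i)
  rw [map_smul, map_smul, map_sub] at h8
  have h9 : hh (e (x₀ i)) = x₀ i := LinearMap.congr_fun hcomp (x₀ i)
  rw [h9] at h8
  exact h8

end Fwd

end AuxProof


/-- A right `R`-module `M` is RD-injective if and only if `M` is RD-coflat and, for
every family of subgroups `Nᵢ = (M rᵢ : sᵢ)` and every family `(xᵢ)` of elements of
`M` such that the cosets `xᵢ + Nᵢ` have the finite intersection property, the total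
intersection of the cosets is non-empty. -/
theorem rdInjective_iff_rdCoflat_and_fip (R : Type u) [Ring R]
    (M : Type u) [AddCommGroup M] [Module Rᵐᵒᵖ M] :
    RDInjective R M ↔
      (RDCoflat R M ∧
        ∀ (ι : Type u) (r s : ι → R) (x : ι → M),
          (∀ J : Finset ι, ∃ m : M, ∀ i ∈ J,
            ∃ y : M, op (s i) • (m - x i) = op (r i) • y) →
          ∃ m : M, ∀ i : ι, ∃ y : M, op (s i) • (m - x i) = op (r i) • y) := by
  constructor
  · intro h
    exact ⟨fwd_coflat h, fwd_fip h⟩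
  · rintro ⟨hco, hfip⟩
    exact backward_dir hco hfip
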